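/- Fix r > 0 and t ≠ 0. Let s(t) ≥ 0 be the unique nonnegative real with cosh(s(t)) = cosh r · cosh t, and let β(t) = arcsin( sinh r / sinh(s(t)) ). Then sinh(s(t))² · (dβ/dt)² + (ds/dt)² = cosh(r)², where dβ/dt and ds/dt denote the derivatives of the functions t ↦ β(t) and t ↦ s(t) at t. -/

import Mathlib

/-- The hypotenuse `s(t, r)`: the unique nonnegative real with
`cosh (polarS t r) = cosh r * cosh t` (see `polarS_nonneg` and `cosh_polarS`). -/
noncomputable def polarS (t r : ℝ) : ℝ :=
  Real.arsinh (Real.sqrt ((Real.cosh r * Real.cosh t) ^ 2 - 1))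

theorem polarS_nonneg (t r : ℝ) : 0 ≤ polarS t r :=
  Real.arsinh_nonneg_iff.mpr (Real.sqrt_nonneg _)

theorem cosh_polarS (t r : ℝ) : Real.cosh (polarS t r) = Real.cosh r * Real.cosh t := by
  have h1 : (1 : ℝ) ≤ Real.cosh r * Real.cosh t := by
    nlinarith [Real.one_le_cosh r, Real.one_le_cosh t]
  have h2 : (0 : ℝ) ≤ (Real.cosh r * Real.cosh t) ^ 2 - 1 := by nlinarith
  rw [polarS, Real.cosh_arsinh, Real.sq_sqrt h2]
  rw [show (1 : ℝ) + ((Real.cosh r * Real.cosh t) ^ 2 - 1)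
      = (Real.cosh r * Real.cosh t) ^ 2 by ring]
  exact Real.sqrt_sq (by linarith)

/-- The angle `β(t, r) = arcsin (sinh r / sinh (s(t, r)))`. -/
noncomputable def polarBeta (t r : ℝ) : ℝ :=
  Real.arcsin (Real.sinh r / Real.sinh (polarS t r))

set_option maxHeartbeats 1000000 in
/-- Fix `r > 0` and `t ≠ 0`. With `s(t') = polarS t' r` and
`β(t') = arcsin (sinh r / sinh (s(t')))`, one has
`sinh (s t)² * (dβ/dt)² + (ds/dt)² = cosh(r)²`. -/
theorem fermi_polar_t_component (r t : ℝ) (hr : 0 < r) (ht : t ≠ 0) :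
    Real.sinh (polarS t r) ^ 2 * (deriv (fun t' : ℝ => polarBeta t' r) t) ^ 2
        + (deriv (fun t' : ℝ => polarS t' r) t) ^ 2
      = Real.cosh r ^ 2 := by
  have hc1 : 1 < Real.cosh r := by
    have := Real.cosh_pos (x := r)
    nlinarith [Real.sinh_pos_iff.mpr hr, Real.cosh_sq r]
  set c := Real.cosh r with hc
  set ch := Real.cosh t with hch
  set sh := Real.sinh t with hsh0
  have hch1 : 1 ≤ ch := Real.one_le_cosh t
  have hsh : sh ≠ 0 := by
    simpa [hsh0] using Real.sinh_ne_zero.mpr ht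
  have hsr : 0 < Real.sinh r := Real.sinh_pos_iff.mpr hr
  have hsr2 : Real.sinh r ^ 2 = c ^ 2 - 1 := by
    have := Real.cosh_sq r; nlinarith
  have hsh2 : sh ^ 2 = ch ^ 2 - 1 := by
    have := Real.cosh_sq t; nlinarith
  have hg : 0 < (c * ch) ^ 2 - 1 := by nlinarith
  set q := Real.sqrt ((c * ch) ^ 2 - 1) with hq
  have hq2 : q ^ 2 = (c * ch) ^ 2 - 1 := Real.sq_sqrt hg.le
  have hqpos : 0 < q := Real.sqrt_pos.mpr hg
  -- derivative of the inner function
  have hinner : HasDerivAt (fun t' : ℝ => (c * Real.cosh t') ^ 2 - 1)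
      (2 * c ^ 2 * ch * sh) t := by
    have h := (((Real.hasDerivAt_cosh t).const_mul c).pow 2).sub_const 1
    refine h.congr_deriv ?_
    ring
  have hsqrt : HasDerivAt (fun t' : ℝ => Real.sqrt ((c * Real.cosh t') ^ 2 - 1))
      (c ^ 2 * ch * sh / q) t := by
    have h := (Real.hasDerivAt_sqrt hg.ne').comp t hinner
    refine h.congr_deriv ?_
    rw [← hq]
    field_simp
  -- derivative of s
  have hS : HasDerivAt (fun t' : ℝ => polarS t' r) (c * sh / q) t := by
    have h := (Real.hasDerivAt_arsinh q).comp t hsqrt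
    have h1q : Real.sqrt (1 + q ^ 2) = c * ch := by
      rw [hq2, show 1 + ((c * ch) ^ 2 - 1) = (c * ch) ^ 2 by ring]
      exact Real.sqrt_sq (by positivity)
    have hfun : (fun t' : ℝ => polarS t' r)
        = fun t' : ℝ => Real.arsinh (Real.sqrt ((c * Real.cosh t') ^ 2 - 1)) := rfl
    rw [hfun]
    refine h.congr_deriv ?_
    rw [h1q]
    field_simp
  -- the value x = sinh r / q lies strictly between 0 and 1
  have hsh2pos : 0 < sh ^ 2 := by positivity
  have hqsr : Real.sinh r < q := by
    have : Real.sinh r ^ 2 < q ^ 2 := by rw [hq2]; nlinarith [hsr2, hsh2, hsh2pos]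
    nlinarith
  have hx0 : 0 < Real.sinh r / q := by positivity
  have hx1 : Real.sinh r / q < 1 := by
    rw [div_lt_one hqpos]; exact hqsr
  -- derivative of the quotient
  have hquot : HasDerivAt (fun t' : ℝ => Real.sinh r / Real.sqrt ((c * Real.cosh t') ^ 2 - 1))
      (-(Real.sinh r * (c ^ 2 * ch * sh / q)) / q ^ 2) t := by
    have h := (hasDerivAt_const t (Real.sinh r)).div hsqrt hqpos.ne'
    refine h.congr_deriv ?_
    rw [← hq]
    ring
  have hw2 : 1 - (Real.sinh r / q) ^ 2 = c ^ 2 * sh ^ 2 / q ^ 2 := by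
    field_simp
    nlinarith [hq2]
  set w := Real.sqrt (1 - (Real.sinh r / q) ^ 2) with hwdef
  have hwpos : 0 < w := Real.sqrt_pos.mpr (by nlinarith)
  have hwsq : w ^ 2 = c ^ 2 * sh ^ 2 / q ^ 2 := by
    rw [hwdef, Real.sq_sqrt (by nlinarith), hw2]
  -- derivative of β
  have hB : HasDerivAt (fun t' : ℝ => polarBeta t' r)
      (w⁻¹ * (-(Real.sinh r * (c ^ 2 * ch * sh / q)) / q ^ 2)) t := by
    have harc := Real.hasDerivAt_arcsin (by linarith : Real.sinh r / q ≠ -1)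
      (by linarith : Real.sinh r / q ≠ 1)
    have h := harc.comp t hquot
    have hfun : (fun t' : ℝ => polarBeta t' r)
        = fun t' : ℝ => Real.arcsin (Real.sinh r / Real.sqrt ((c * Real.cosh t') ^ 2 - 1)) := by
      funext t'
      simp [polarBeta, polarS, Real.sinh_arsinh, hc]
    rw [hfun]
    refine h.congr_deriv ?_
    rw [← hwdef]
    field_simp
  -- sinh s = q
  have hsinhS : Real.sinh (polarS t r) = q := by
    simp [polarS, Real.sinh_arsinh, hq, hc, hch]
  rw [hS.deriv, hB.deriv, hsinhS]
  have hwne : w ≠ 0 := hwpos.ne'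
  have hwq : w ^ 2 * q ^ 2 = c ^ 2 * sh ^ 2 := by
    rw [hwsq]; field_simp
  have hq2' : q ^ 2 = Real.sinh r ^ 2 * ch ^ 2 + sh ^ 2 := by nlinarith [hq2, hsr2, hsh2]
  field_simp
  linear_combination (sh ^ 2 - q ^ 2) * hwq - c ^ 2 * sh ^ 2 * hq2'
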